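/- (Hoffman's partition identity) Let n ≥ 1 and let s₁, …, sₙ be integers with sᵢ ≥ 2 for all i. Then ∑_{σ ∈ Sₙ} ζ(s_{σ(1)}, …, s_{σ(n)}) = ∑_𝒯 (−1)^{n−|𝒯|} · (∏_{T ∈ 𝒯} (|T|−1)!) · ∏_{T ∈ 𝒯} ζ(∑_{j ∈ T} s_j), where the outer sum on the right runs over all unordered set partitions 𝒯 of {1, …, n} into nonempty blocks, |𝒯| is the number of blocks of 𝒯, and |T| is the size of the block T. -/

import Mathlib

set_option maxHeartbeats 1000000

open Finset Function Set

/-- The multiple zeta value `ζ(s₁, …, s_k) = ∑_{n₁ > ⋯ > n_k ≥ 1} 1/(n₁^{s₁}⋯n_k^{s_k})`,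
as a sum over strictly decreasing `k`-tuples of positive integers. -/
noncomputable def multipleZeta {k : ℕ} (s : Fin k → ℕ) : ℝ :=
  ∑' v : {v : Fin k → ℕ // StrictAnti v ∧ ∀ i, 0 < v i},
    ∏ i : Fin k, (1 : ℝ) / ((v.1 i : ℝ) ^ (s i))

namespace Hoffman

/-- single factor -/
noncomputable def g (t : ℕ) (m : ℕ) : ℝ := 1 / (m : ℝ) ^ t

lemma g_nonneg (t m : ℕ) : 0 ≤ g t m := by unfold g; positivity

lemma g_zero {t : ℕ} (ht : 1 ≤ t) : g t 0 = 0 := by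
  simp [g, zero_pow (by omega : t ≠ 0)]

lemma summable_g {t : ℕ} (ht : 2 ≤ t) : Summable (g t) := by
  unfold g; exact Real.summable_one_div_nat_pow.mpr (by omega)

lemma g_prod {ι : Type*} (T : Finset ι) (s : ι → ℕ) (x : ℕ) :
    ∏ i ∈ T, g (s i) x = g (∑ i ∈ T, s i) x := by
  simp only [g, one_div, ← inv_pow]
  exact Finset.prod_pow_eq_pow_sum T s _

/-- product of summable nonneg families over a pi type, Fin version -/
lemma hasSum_pi_fin (k : ℕ) (G : Fin k → ℕ → ℝ) (hnn : ∀ i m, 0 ≤ G i m)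
    (hsum : ∀ i, Summable (G i)) :
    HasSum (fun w : Fin k → ℕ => ∏ i, G i (w i)) (∏ i, ∑' m, G i m) := by
  induction k with
  | zero =>
    have : HasSum (fun w : Fin 0 → ℕ => ∏ i, G i (w i)) (∏ i, G i ((default : Fin 0 → ℕ) i)) :=
      hasSum_single _ (fun b hb => absurd (Subsingleton.elim b default) hb)
    simpa using this
  | succ k IHk =>
    have IH := IHk (fun i => G i.succ) (fun i m => hnn _ m) (fun i => hsum _)
    have h0 : HasSum (G 0) (∑' m, G 0 m) := (hsum 0).hasSum
    have hmul : HasSum (fun p : ℕ × (Fin k → ℕ) => G 0 p.1 * ∏ i : Fin k, G i.succ (p.2 i))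
        ((∑' m, G 0 m) * ∏ i : Fin k, ∑' m, G i.succ m) := by
      refine HasSum.mul (f := G 0) (g := fun w : Fin k → ℕ => ∏ i : Fin k, G i.succ (w i))
        h0 IH ?_
      exact Summable.mul_of_nonneg (f := G 0)
        (g := fun w : Fin k → ℕ => ∏ i : Fin k, G i.succ (w i)) (hsum 0) IH.summable
        (fun m => hnn 0 m) (fun w => Finset.prod_nonneg fun i _ => hnn _ _)
    set e := (Fin.consEquiv (fun _ : Fin (k+1) => ℕ)).symm with he
    have key : HasSum ((fun w : Fin (k+1) → ℕ => ∏ i, G i (w i)) ∘ e.symm)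
        ((∑' m, G 0 m) * ∏ i : Fin k, ∑' m, G i.succ m) := by
      have hfun : ((fun w : Fin (k+1) → ℕ => ∏ i, G i (w i)) ∘ e.symm) =
          fun p : ℕ × (Fin k → ℕ) => G 0 p.1 * ∏ i : Fin k, G i.succ (p.2 i) := by
        funext p
        simp [e, Fin.consEquiv, Fin.prod_univ_succ]
      rw [hfun]; exact hmul
    have final := (Equiv.hasSum_iff e.symm).mp key
    rw [Fin.prod_univ_succ]
    exact final

/-- product of summable nonneg families over a pi type, general finite index -/
lemma hasSum_pi {ι : Type*} [Fintype ι] (G : ι → ℕ → ℝ) (hnn : ∀ i m, 0 ≤ G i m)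
    (hsum : ∀ i, Summable (G i)) :
    HasSum (fun w : ι → ℕ => ∏ i, G i (w i)) (∏ i, ∑' m, G i m) := by
  obtain e : ι ≃ Fin (Fintype.card ι) := Fintype.equivFin ι
  have base := hasSum_pi_fin (Fintype.card ι) (fun j => G (e.symm j))
    (fun j m => hnn _ m) (fun j => hsum _)
  have key := (Equiv.hasSum_iff (a := ∏ j, ∑' m, G (e.symm j) m)
      (f := fun u : Fin (Fintype.card ι) → ℕ => ∏ j, G (e.symm j) (u j))
      (Equiv.arrowCongr e (Equiv.refl ℕ))).mpr base
  have h1 : ((fun u : Fin (Fintype.card ι) → ℕ => ∏ j, G (e.symm j) (u j)) ∘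
      (Equiv.arrowCongr e (Equiv.refl ℕ))) = fun w : ι → ℕ => ∏ i, G i (w i) := by
    funext w
    simp only [Function.comp_apply, Equiv.arrowCongr_apply, Equiv.refl_apply, Function.comp]
    exact Equiv.prod_comp e.symm (fun i => G i (w i))
  have h2 : (∏ j, ∑' m, G (e.symm j) m) = ∏ i, ∑' m, G i m :=
    Equiv.prod_comp e.symm (fun i => ∑' m, G i m)
  rw [h1, h2] at key
  exact key

lemma strictAnti_subsingleton {α β : Type*} [Preorder α] [Preorder β] [Subsingleton α]
    (f : α → β) : StrictAnti f := fun a b hab =>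
  absurd (Subsingleton.elim a b ▸ hab) (lt_irrefl b)

/-- `multipleZeta` with a single exponent is an honest zeta value. -/
lemma multipleZeta_single {t : ℕ} (ht : 1 ≤ t) :
    multipleZeta (fun _ : Fin 1 => t) = ∑' m, g t m := by
  rw [multipleZeta]
  have hinj : Function.Injective
      (fun v : {v : Fin 1 → ℕ // StrictAnti v ∧ ∀ i, 0 < v i} => v.1 0) := by
    rintro ⟨v, hv⟩ ⟨u, hu⟩ h
    simp only at h
    refine Subtype.ext (funext fun i => ?_)
    rw [Subsingleton.elim i 0]; exact h
  have hsupp : Function.support (g t) ⊆ Set.range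
      (fun v : {v : Fin 1 → ℕ // StrictAnti v ∧ ∀ i, 0 < v i} => v.1 0) := by
    intro m hm
    rcases Nat.eq_zero_or_pos m with rfl | hpos
    · exact absurd (g_zero ht) hm
    · exact ⟨⟨fun _ => m, strictAnti_subsingleton _, fun _ => hpos⟩, rfl⟩
  have := hinj.tsum_eq (f := g t) hsupp
  rw [← this]
  refine tsum_congr fun v => ?_
  rw [Fin.prod_univ_one]
  rfl

variable {n : ℕ}

/-- the global summand -/
noncomputable def F (s : Fin n → ℕ) (w : Fin n → ℕ) : ℝ := ∏ i, g (s i) (w i)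

lemma sum_block_ge {s : Fin n → ℕ} (hs : ∀ i, 2 ≤ s i) {T : Finset (Fin n)}
    (hT : T.Nonempty) : 2 ≤ ∑ j ∈ T, s j := by
  obtain ⟨j, hj⟩ := hT
  exact le_trans (hs j) (Finset.single_le_sum (fun i _ => Nat.zero_le _) hj)

lemma hasSum_partition (s : Fin n → ℕ) (hs : ∀ i, 2 ≤ s i) (𝒯 : Finset (Finset (Fin n)))
    (h1 : ∀ T ∈ 𝒯, T.Nonempty) (h2 : ∀ T ∈ 𝒯, ∀ T' ∈ 𝒯, T ≠ T' → Disjoint T T')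
    (h3 : 𝒯.sup id = Finset.univ) :
    HasSum (Set.indicator {w : Fin n → ℕ | ∀ T ∈ 𝒯, ∀ i ∈ T, ∀ j ∈ T, w i = w j} (F s))
      (∏ T ∈ 𝒯, ∑' m, g (∑ j ∈ T, s j) m) := by
  classical
  set C : Set (Fin n → ℕ) := {w : Fin n → ℕ | ∀ T ∈ 𝒯, ∀ i ∈ T, ∀ j ∈ T, w i = w j} with hC
  have hmem : ∀ i : Fin n, ∃! T, T ∈ 𝒯 ∧ i ∈ T := by
    intro i
    have hi : i ∈ 𝒯.sup id := h3 ▸ Finset.mem_univ i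
    rw [Finset.mem_sup] at hi
    obtain ⟨T, hT, hiT⟩ := hi
    refine ⟨T, ⟨hT, hiT⟩, ?_⟩
    rintro T' ⟨hT', hiT'⟩
    by_contra hne
    exact (Finset.disjoint_left.mp (h2 T' hT' T hT hne) hiT') hiT
  set β : Fin n → {T // T ∈ 𝒯} := fun i => ⟨(hmem i).choose, (hmem i).choose_spec.1.1⟩
    with hβdef
  have hβ : ∀ i, i ∈ (β i).1 := fun i => (hmem i).choose_spec.1.2
  have hβuniq : ∀ (i : Fin n) (T : Finset (Fin n)) (hT : T ∈ 𝒯), i ∈ T → β i = ⟨T, hT⟩ :=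
    fun i T hT hi => Subtype.ext ((hmem i).choose_spec.2 T ⟨hT, hi⟩).symm
  have hmemβ : ∀ (i : Fin n) (T : {T // T ∈ 𝒯}), i ∈ T.1 ↔ β i = T := by
    intro i T
    constructor
    · intro hi; exact hβuniq i T.1 T.2 hi
    · rintro rfl; exact hβ i
  set ψ : ({T // T ∈ 𝒯} → ℕ) → (Fin n → ℕ) := fun m i => m (β i) with hψdef
  have hψinj : Function.Injective ψ := by
    intro m m' h
    funext T
    obtain ⟨i, hi⟩ := h1 T.1 T.2
    have h' := congrFun h i
    simpa [hψdef, (hmemβ i T).mp hi] using h'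
  have hψC : ∀ m, ψ m ∈ C := by
    intro m T hT i hi j hj
    show m (β i) = m (β j)
    rw [(hmemβ i ⟨T, hT⟩).mp hi, (hmemβ j ⟨T, hT⟩).mp hj]
  have hrange : ∀ w ∉ Set.range ψ, Set.indicator C (F s) w = 0 := by
    intro w hw
    rcases Classical.em (w ∈ C) with hwc | hwc
    · exfalso
      apply hw
      refine ⟨fun T => w ((h1 T.1 T.2).choose), ?_⟩
      funext i
      show w ((h1 (β i).1 (β i).2).choose) = w i
      exact hwc (β i).1 (β i).2 _ ((h1 (β i).1 (β i).2).choose_spec) i (hβ i)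
    · exact Set.indicator_of_notMem hwc _
  rw [← Function.Injective.hasSum_iff hψinj hrange]
  have hcomp : (Set.indicator C (F s)) ∘ ψ =
      fun m : {T // T ∈ 𝒯} → ℕ => ∏ T : {T // T ∈ 𝒯}, g (∑ j ∈ T.1, s j) (m T) := by
    funext m
    rw [Function.comp_apply, Set.indicator_of_mem (hψC m)]
    show ∏ i, g (s i) (m (β i)) = _
    rw [← Finset.prod_fiberwise Finset.univ β (fun i => g (s i) (m (β i)))]
    refine Finset.prod_congr rfl fun T _ => ?_
    have hfil : Finset.univ.filter (fun i => β i = T) = T.1 := by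
      ext i; simp [hmemβ i T]
    rw [hfil, ← g_prod T.1 s (m T)]
    refine Finset.prod_congr rfl fun i hi => ?_
    rw [(hmemβ i T).mp hi]
  rw [hcomp]
  have key := hasSum_pi (fun T : {T // T ∈ 𝒯} => g (∑ j ∈ T.1, s j))
    (fun T m => g_nonneg _ m) (fun T => summable_g (sum_block_ge hs (h1 T.1 T.2)))
  have hval : (∏ T : {T // T ∈ 𝒯}, ∑' m, g (∑ j ∈ T.1, s j) m)
      = ∏ T ∈ 𝒯, ∑' m, g (∑ j ∈ T, s j) m :=
    Finset.prod_coe_sort 𝒯 (fun T => ∑' m, g (∑ j ∈ T, s j) m)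
  rw [← hval]
  exact key

lemma rev_strictAnti : StrictAnti (Fin.rev : Fin n → Fin n) :=
  fun _ _ h => Fin.rev_lt_rev.mpr h

lemma summable_F (s : Fin n → ℕ) (hs : ∀ i, 2 ≤ s i) : Summable (F s) :=
  (hasSum_pi (fun i => g (s i)) (fun _ m => g_nonneg _ m)
    (fun i => summable_g (hs i))).summable

lemma slice_eq (s : Fin n → ℕ) (σ : Equiv.Perm (Fin n)) (v : Fin n → ℕ) :
    F s (v ∘ ⇑σ⁻¹) = ∏ i, g (s (σ i)) (v i) := by
  unfold F
  rw [← Equiv.prod_comp σ (fun i => g (s i) ((v ∘ ⇑σ⁻¹) i))]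
  simp

lemma hasSum_lhs (s : Fin n → ℕ) (hs : ∀ i, 2 ≤ s i) :
    HasSum (Set.indicator {w : Fin n → ℕ | Function.Injective w ∧ ∀ i, 0 < w i} (F s))
      (∑ σ : Equiv.Perm (Fin n), multipleZeta (fun i => s (σ i))) := by
  classical
  set Inj : Set (Fin n → ℕ) := {w | Function.Injective w ∧ ∀ i, 0 < w i} with hI
  set Ψ : Equiv.Perm (Fin n) × {v : Fin n → ℕ // StrictAnti v ∧ ∀ i, 0 < v i} →
      (Fin n → ℕ) := fun p => p.2.1 ∘ ⇑p.1⁻¹ with hΨ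
  have hΨinj : Function.Injective Ψ := by
    rintro ⟨σ, v⟩ ⟨τ, u⟩ h
    simp only [hΨ] at h
    set w : Fin n → ℕ := v.1 ∘ ⇑σ⁻¹ with hw
    have hwinj : Function.Injective w := (v.2.1.injective).comp (Equiv.injective _)
    have hvw : ∀ x, v.1 x = w (σ x) := by intro x; simp [hw]
    have huw : ∀ x, u.1 x = w (τ x) := by
      intro x; rw [h]; simp
    have m1 : Monotone (w ∘ ⇑(Fin.revPerm.trans σ)) := by
      have : (w ∘ ⇑(Fin.revPerm.trans σ)) = v.1 ∘ Fin.rev := by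
        funext x; simp [Equiv.trans_apply, ← hvw]
      rw [this]
      exact (v.2.1.comp rev_strictAnti).monotone
    have m2 : Monotone (w ∘ ⇑(Fin.revPerm.trans τ)) := by
      have : (w ∘ ⇑(Fin.revPerm.trans τ)) = u.1 ∘ Fin.rev := by
        funext x; simp [Equiv.trans_apply, ← huw]
      rw [this]
      exact (u.2.1.comp rev_strictAnti).monotone
    have heq := Tuple.unique_monotone m1 m2
    have hστ : σ = τ := by
      ext y
      have hx := congrFun heq (Fin.rev y)
      simp only [Function.comp_apply, Equiv.trans_apply, Fin.revPerm_apply, Fin.rev_rev] at hx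
      exact congrArg Fin.val (hwinj hx)
    subst hστ
    have hvu : v = u := by
      refine Subtype.ext (funext fun x => ?_)
      rw [hvw x, huw x]
    rw [hvu]
  have hrange : ∀ w ∉ Set.range Ψ, Set.indicator Inj (F s) w = 0 := by
    intro w hw
    rcases Classical.em (w ∈ Inj) with hwI | hwI
    · exfalso
      apply hw
      obtain ⟨hwinj, hwpos⟩ := hwI
      set τ := Tuple.sort w with hτ
      have hmono : Monotone (w ∘ ⇑τ) := Tuple.monotone_sort w
      have hstrict : StrictMono (w ∘ ⇑τ) :=
        hmono.strictMono_of_injective (hwinj.comp (Equiv.injective τ))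
      have hanti : StrictAnti (w ∘ ⇑(Fin.revPerm.trans τ)) := by
        have : (w ∘ ⇑(Fin.revPerm.trans τ)) = (w ∘ ⇑τ) ∘ Fin.rev := by
          funext x; simp [Equiv.trans_apply]
        rw [this]
        exact hstrict.comp_strictAnti rev_strictAnti
      refine ⟨⟨Fin.revPerm.trans τ, ⟨w ∘ ⇑(Fin.revPerm.trans τ), hanti, fun i => hwpos _⟩⟩, ?_⟩
      simp only [hΨ]
      funext x
      simp [Equiv.Perm.inv_def, Equiv.symm_trans_apply, Fin.rev_rev]
    · exact Set.indicator_of_notMem hwI _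
  rw [← Function.Injective.hasSum_iff hΨinj hrange]
  have hmemI : ∀ p, Ψ p ∈ Inj :=
    fun p => ⟨(p.2.2.1.injective).comp (Equiv.injective _), fun i => p.2.2.2 _⟩
  have hcomp : (Set.indicator Inj (F s)) ∘ Ψ =
      fun p : Equiv.Perm (Fin n) × {v : Fin n → ℕ // StrictAnti v ∧ ∀ i, 0 < v i} =>
        ∏ i, g (s (p.1 i)) (p.2.1 i) := by
    funext p
    rw [Function.comp_apply, Set.indicator_of_mem (hmemI p)]
    exact slice_eq s p.1 p.2.1
  rw [hcomp]
  have hslice : ∀ σ : Equiv.Perm (Fin n),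
      HasSum (fun v : {v : Fin n → ℕ // StrictAnti v ∧ ∀ i, 0 < v i} =>
        ∏ i, g (s (σ i)) (v.1 i)) (multipleZeta fun i => s (σ i)) := by
    intro σ
    have hsummable : Summable (fun v : {v : Fin n → ℕ // StrictAnti v ∧ ∀ i, 0 < v i} =>
        ∏ i, g (s (σ i)) (v.1 i)) := by
      have := (summable_F (fun i => s (σ i)) (fun i => hs _)).comp_injective
        (Subtype.val_injective :
          Function.Injective ((↑) : {v : Fin n → ℕ // StrictAnti v ∧ ∀ i, 0 < v i} → _))
      exact this
    have hzeta : multipleZeta (fun i => s (σ i)) =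
        ∑' v : {v : Fin n → ℕ // StrictAnti v ∧ ∀ i, 0 < v i}, ∏ i, g (s (σ i)) (v.1 i) := by
      rw [multipleZeta]
      exact tsum_congr fun v => Finset.prod_congr rfl fun i _ => rfl
    rw [hzeta]
    exact hsummable.hasSum
  have hterm : ∀ σ₀ : Equiv.Perm (Fin n),
      HasSum (fun p : Equiv.Perm (Fin n) × {v : Fin n → ℕ // StrictAnti v ∧ ∀ i, 0 < v i} =>
        if σ₀ = p.1 then ∏ i, g (s (p.1 i)) (p.2.1 i) else 0)
      (multipleZeta fun i => s (σ₀ i)) := by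
    intro σ₀
    have hinj2 : Function.Injective
        (fun v : {v : Fin n → ℕ // StrictAnti v ∧ ∀ i, 0 < v i} => (σ₀, v)) :=
      fun a b h => (Prod.ext_iff.mp h).2
    have hr : ∀ p ∉ Set.range (fun v : {v : Fin n → ℕ // StrictAnti v ∧ ∀ i, 0 < v i} =>
        ((σ₀, v) : Equiv.Perm (Fin n) × _)),
        (if σ₀ = p.1 then ∏ i, g (s (p.1 i)) (p.2.1 i) else 0) = 0 := by
      intro p hp
      rw [if_neg]
      intro h
      exact hp ⟨p.2, Prod.ext h rfl⟩
    rw [← Function.Injective.hasSum_iff hinj2 hr]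
    refine (hslice σ₀).congr_fun fun v => ?_
    simp
  have total := hasSum_sum (s := (Finset.univ : Finset (Equiv.Perm (Fin n))))
    (f := fun σ₀ (p : Equiv.Perm (Fin n) × {v : Fin n → ℕ // StrictAnti v ∧ ∀ i, 0 < v i}) =>
      if σ₀ = p.1 then ∏ i, g (s (p.1 i)) (p.2.1 i) else 0)
    (a := fun σ₀ => multipleZeta fun i => s (σ₀ i)) (fun σ₀ _ => hterm σ₀)
  refine total.congr_fun fun p => ?_
  simp [Finset.sum_ite_eq']

section Combinatorics

/-- partitions of `A` into nonempty blocks on which `w` is constant -/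
def parts (w : Fin n → ℕ) (A : Finset (Fin n)) : Finset (Finset (Finset (Fin n))) :=
  Finset.univ.filter (fun 𝒯 => (∀ T ∈ 𝒯, T.Nonempty) ∧
    (∀ T ∈ 𝒯, ∀ T' ∈ 𝒯, T ≠ T' → Disjoint T T') ∧ 𝒯.sup id = A ∧
    (∀ T ∈ 𝒯, ∀ i ∈ T, ∀ j ∈ T, w i = w j))

/-- the signed Möbius-type sum over such partitions -/
noncomputable def M (w : Fin n → ℕ) (A : Finset (Fin n)) : ℝ :=
  ∑ 𝒯 ∈ parts w A, (-1 : ℝ) ^ (A.card - 𝒯.card) * ∏ T ∈ 𝒯, ((T.card - 1).factorial : ℝ)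

lemma parts_empty (w : Fin n → ℕ) : parts w ∅ = {∅} := by
  ext 𝒯
  simp only [parts, Finset.mem_filter, Finset.mem_univ, true_and, Finset.mem_singleton]
  constructor
  · rintro ⟨h1, _, h3, _⟩
    by_contra hne
    obtain ⟨T, hT⟩ := Finset.nonempty_iff_ne_empty.mpr hne
    obtain ⟨i, hi⟩ := h1 T hT
    have : i ∈ 𝒯.sup id := Finset.le_sup (f := id) hT hi
    rw [h3] at this
    exact absurd this (Finset.notMem_empty i)
  · rintro rfl
    refine ⟨by simp, by simp, ?_, by simp⟩
    simp

lemma card_le_of_parts {w : Fin n → ℕ} {A : Finset (Fin n)} {𝒯 : Finset (Finset (Fin n))}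
    (h : 𝒯 ∈ parts w A) : 𝒯.card ≤ A.card := by
  simp only [parts, Finset.mem_filter] at h
  obtain ⟨_, h1, h2, h3, _⟩ := h
  have hb : A = 𝒯.biUnion id := by rw [← h3, Finset.sup_eq_biUnion]
  have hcard : (𝒯.biUnion id).card = ∑ T ∈ 𝒯, (id T).card :=
    Finset.card_biUnion (fun x hx y hy hxy => h2 x hx y hy hxy)
  rw [hb, hcard]
  calc 𝒯.card = ∑ _T ∈ 𝒯, 1 := by simp
  _ ≤ ∑ T ∈ 𝒯, (id T).card := Finset.sum_le_sum fun T hT => Finset.card_pos.mpr (h1 T hT)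

/-- the unique block of the partition containing `a` -/
def blockOf (𝒯 : Finset (Finset (Fin n))) (a : Fin n) : Finset (Fin n) :=
  (𝒯.filter (fun T => a ∈ T)).sup id

lemma blockOf_spec {w : Fin n → ℕ} {A : Finset (Fin n)} {𝒯 : Finset (Finset (Fin n))}
    (h : 𝒯 ∈ parts w A) {a : Fin n} (ha : a ∈ A) :
    blockOf 𝒯 a ∈ 𝒯 ∧ a ∈ blockOf 𝒯 a := by
  simp only [parts, Finset.mem_filter] at h
  obtain ⟨_, h1, h2, h3, h4⟩ := h
  have hex : a ∈ 𝒯.sup id := by rw [h3]; exact ha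
  rw [Finset.mem_sup] at hex
  obtain ⟨B, hB, haB⟩ := hex
  have hfil : 𝒯.filter (fun T => a ∈ T) = {B} := by
    ext T
    simp only [Finset.mem_filter, Finset.mem_singleton]
    constructor
    · rintro ⟨hT, haT⟩
      by_contra hne
      exact (Finset.disjoint_left.mp (h2 T hT B hB hne) haT) haB
    · rintro rfl; exact ⟨hB, haB⟩
  rw [blockOf, hfil, Finset.sup_singleton]
  exact ⟨hB, haB⟩

lemma parts_mem_iff {w : Fin n → ℕ} {A : Finset (Fin n)} {𝒯 : Finset (Finset (Fin n))} :
    𝒯 ∈ parts w A ↔ (∀ T ∈ 𝒯, T.Nonempty) ∧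
      (∀ T ∈ 𝒯, ∀ T' ∈ 𝒯, T ≠ T' → Disjoint T T') ∧ 𝒯.sup id = A ∧
      (∀ T ∈ 𝒯, ∀ i ∈ T, ∀ j ∈ T, w i = w j) := by
  simp [parts]

lemma erase_parts {w : Fin n → ℕ} {A : Finset (Fin n)} {𝒯 : Finset (Finset (Fin n))}
    (h𝒯 : 𝒯 ∈ parts w A) {B : Finset (Fin n)} (hB : B ∈ 𝒯) :
    𝒯.erase B ∈ parts w (A \ B) := by
  rw [parts_mem_iff] at h𝒯 ⊢
  obtain ⟨h1, h2, h3, h4⟩ := h𝒯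
  refine ⟨fun T hT => h1 T (Finset.mem_of_mem_erase hT),
    fun T hT T' hT' hne => h2 T (Finset.mem_of_mem_erase hT) T'
      (Finset.mem_of_mem_erase hT') hne, ?_,
    fun T hT => h4 T (Finset.mem_of_mem_erase hT)⟩
  ext x
  rw [Finset.mem_sup, Finset.mem_sdiff]
  constructor
  · rintro ⟨T, hT, hxT⟩
    have hTA : T ⊆ A := by
      intro y hy
      rw [← h3, Finset.mem_sup]
      exact ⟨T, Finset.mem_of_mem_erase hT, hy⟩
    refine ⟨hTA hxT, fun hxB => ?_⟩
    exact Finset.disjoint_left.mp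
      (h2 T (Finset.mem_of_mem_erase hT) B hB (Finset.ne_of_mem_erase hT)) hxT hxB
  · rintro ⟨hxA, hxB⟩
    have hx' : x ∈ 𝒯.sup id := by rw [h3]; exact hxA
    rw [Finset.mem_sup] at hx'
    obtain ⟨T, hT, hxT⟩ := hx'
    have hTne : T ≠ B := fun h => hxB (by rw [← h]; exact hxT)
    exact ⟨T, Finset.mem_erase.mpr ⟨hTne, hT⟩, hxT⟩

lemma M_rec (w : Fin n → ℕ) (A : Finset (Fin n)) {a : Fin n} (ha : a ∈ A) :
    M w A = ∑ B ∈ A.powerset.filter (fun B => a ∈ B ∧ ∀ i ∈ B, w i = w a),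
      (-1 : ℝ) ^ (B.card - 1) * ((B.card - 1).factorial : ℝ) * M w (A \ B) := by
  unfold M
  have hdist : ∀ B : Finset (Fin n),
      (-1 : ℝ) ^ (B.card - 1) * ((B.card - 1).factorial : ℝ) *
        (∑ 𝒯' ∈ parts w (A \ B),
          (-1 : ℝ) ^ ((A \ B).card - 𝒯'.card) * ∏ T ∈ 𝒯', ((T.card - 1).factorial : ℝ)) =
      ∑ 𝒯' ∈ parts w (A \ B), (-1 : ℝ) ^ (B.card - 1) * ((B.card - 1).factorial : ℝ) *
        ((-1 : ℝ) ^ ((A \ B).card - 𝒯'.card) * ∏ T ∈ 𝒯', ((T.card - 1).factorial : ℝ)) :=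
    fun B => Finset.mul_sum _ _ _
  rw [Finset.sum_congr rfl (fun B _ => hdist B), Finset.sum_sigma']
  refine Finset.sum_nbij' (i := fun 𝒯 => ⟨blockOf 𝒯 a, 𝒯.erase (blockOf 𝒯 a)⟩)
    (j := fun p => insert p.1 p.2) ?_ ?_ ?_ ?_ ?_
  -- i maps into the sigma set
  · intro 𝒯 h𝒯
    obtain ⟨hBmem, haB⟩ := blockOf_spec h𝒯 ha
    set B := blockOf 𝒯 a with hBdef
    rw [parts_mem_iff] at h𝒯
    obtain ⟨h1, h2, h3, h4⟩ := h𝒯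
    have hBA : B ⊆ A := h3 ▸ Finset.le_sup (f := id) hBmem
    rw [Finset.mem_sigma]
    constructor
    · rw [Finset.mem_filter, Finset.mem_powerset]
      exact ⟨hBA, haB, fun i hi => h4 B hBmem i hi a haB⟩
    · exact erase_parts (parts_mem_iff.mpr ⟨h1, h2, h3, h4⟩) hBmem
  -- j maps into parts w A
  · rintro ⟨B, 𝒯'⟩ hp
    rw [Finset.mem_sigma] at hp
    obtain ⟨hB, h𝒯'⟩ := hp
    rw [Finset.mem_filter, Finset.mem_powerset] at hB
    obtain ⟨hBA, haB, hconst⟩ := hB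
    rw [parts_mem_iff] at h𝒯' ⊢
    obtain ⟨h1, h2, h3, h4⟩ := h𝒯'
    have hsub : ∀ T ∈ 𝒯', T ⊆ A \ B := fun T hT => h3 ▸ Finset.le_sup (f := id) hT
    refine ⟨?_, ?_, ?_, ?_⟩
    · intro T hT
      rcases Finset.mem_insert.mp hT with rfl | hT'
      · exact ⟨a, haB⟩
      · exact h1 T hT'
    · intro T hT T' hT' hne
      rcases Finset.mem_insert.mp hT with rfl | hTm <;>
        rcases Finset.mem_insert.mp hT' with rfl | hTm'
      · exact absurd rfl hne
      · exact (Finset.disjoint_left.mpr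
          (fun _x hx hxB => (Finset.mem_sdiff.mp (hsub T' hTm' hx)).2 hxB)).symm
      · exact Finset.disjoint_left.mpr
          (fun _x hx hxB => (Finset.mem_sdiff.mp (hsub T hTm hx)).2 hxB)
      · exact h2 T hTm T' hTm' hne
    · rw [Finset.sup_insert, h3]
      show B ∪ (A \ B) = A
      exact Finset.union_sdiff_of_subset hBA
    · intro T hT i hi j hj
      rcases Finset.mem_insert.mp hT with rfl | hTm
      · rw [hconst i hi, hconst j hj]
      · exact h4 T hTm i hi j hj
  -- left inverse
  · intro 𝒯 h𝒯
    exact Finset.insert_erase (blockOf_spec h𝒯 ha).1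
  -- right inverse
  · rintro ⟨B, 𝒯'⟩ hp
    rw [Finset.mem_sigma] at hp
    obtain ⟨hB, h𝒯'⟩ := hp
    rw [Finset.mem_filter, Finset.mem_powerset] at hB
    obtain ⟨hBA, haB, hconst⟩ := hB
    rw [parts_mem_iff] at h𝒯'
    obtain ⟨h1, h2, h3, h4⟩ := h𝒯'
    have hsub : ∀ T ∈ 𝒯', T ⊆ A \ B := fun T hT => h3 ▸ Finset.le_sup (f := id) hT
    have hBnot : B ∉ 𝒯' := by
      intro hmem
      exact (Finset.mem_sdiff.mp (hsub B hmem haB)).2 haB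
    have hblock : blockOf (insert B 𝒯') a = B := by
      have hfil : (insert B 𝒯').filter (fun T => a ∈ T) = {B} := by
        ext T
        simp only [Finset.mem_filter, Finset.mem_insert, Finset.mem_singleton]
        constructor
        · rintro ⟨rfl | hTm, haT⟩
          · rfl
          · exact absurd ((Finset.mem_sdiff.mp (hsub T hTm haT)).2) (fun h => h haB)
        · rintro rfl; exact ⟨Or.inl rfl, haB⟩
      rw [blockOf, hfil, Finset.sup_singleton]
      rfl
    simp only [hblock]
    rw [Finset.erase_insert hBnot]
  -- terms agree
  · intro 𝒯 h𝒯
    obtain ⟨hBmem, haB⟩ := blockOf_spec h𝒯 ha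
    set B := blockOf 𝒯 a with hBdef
    have h𝒯' := h𝒯
    rw [parts_mem_iff] at h𝒯'
    obtain ⟨h1, h2, h3, h4⟩ := h𝒯'
    have hBA : B ⊆ A := h3 ▸ Finset.le_sup (f := id) hBmem
    have hcard1 : (𝒯.erase B).card + 1 = 𝒯.card := Finset.card_erase_add_one hBmem
    have hcardsd : (A \ B).card = A.card - B.card := Finset.card_sdiff_of_subset hBA
    have hBle : B.card ≤ A.card := Finset.card_le_card hBA
    have hBpos : 1 ≤ B.card := Finset.card_pos.mpr ⟨a, haB⟩
    have herase : 𝒯.erase B ∈ parts w (A \ B) := erase_parts h𝒯 hBmem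
    have hTcardle : (𝒯.erase B).card ≤ (A \ B).card := card_le_of_parts herase
    have hexp : A.card - 𝒯.card = (B.card - 1) + ((A \ B).card - (𝒯.erase B).card) := by
      omega
    have hprod : ∏ T ∈ 𝒯, ((T.card - 1).factorial : ℝ) =
        ((B.card - 1).factorial : ℝ) * ∏ T ∈ 𝒯.erase B, ((T.card - 1).factorial : ℝ) :=
      (Finset.mul_prod_erase 𝒯 _ hBmem).symm
    rw [hexp, pow_add, hprod]
    ring

theorem M_eq (w : Fin n → ℕ) (A : Finset (Fin n)) :
    M w A = if Set.InjOn w ↑A then 1 else 0 := by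
  induction A using Finset.strongInduction with
  | _ A ih =>
  rcases A.eq_empty_or_nonempty with rfl | ⟨a, ha⟩
  · rw [if_pos (by simp [Set.injOn_empty])]
    rw [M, parts_empty]
    simp
  · rw [M_rec w A ha]
    have hBss : ∀ B ∈ A.powerset.filter (fun B => a ∈ B ∧ ∀ i ∈ B, w i = w a), A \ B ⊂ A := by
      intro B hB
      rw [Finset.mem_filter, Finset.mem_powerset] at hB
      exact Finset.sdiff_ssubset hB.1 ⟨a, hB.2.1⟩
    rw [Finset.sum_congr rfl (fun B hB => by rw [ih _ (hBss B hB)])]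
    by_cases hinj : Set.InjOn w ↑A
    · rw [if_pos hinj]
      have hset : A.powerset.filter (fun B => a ∈ B ∧ ∀ i ∈ B, w i = w a) = {{a}} := by
        ext B
        simp only [Finset.mem_filter, Finset.mem_powerset, Finset.mem_singleton]
        constructor
        · rintro ⟨hBA, haB, hconst⟩
          ext i
          simp only [Finset.mem_singleton]
          constructor
          · intro hi
            exact hinj (Finset.mem_coe.mpr (hBA hi)) (Finset.mem_coe.mpr (hBA haB))
              (hconst i hi)
          · rintro rfl; exact haB
        · rintro rfl
          exact ⟨Finset.singleton_subset_iff.mpr ha, Finset.mem_singleton_self a, by simp⟩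
      rw [hset, Finset.sum_singleton]
      rw [if_pos (hinj.mono (Finset.coe_subset.mpr Finset.sdiff_subset))]
      simp
    · rw [if_neg hinj]
      have hne : ∃ x ∈ A, ∃ y ∈ A, x ≠ y ∧ w x = w y := by
        by_contra hcon
        push_neg at hcon
        exact hinj fun x hx y hy hxy => by_contra fun hne =>
          hcon x (Finset.mem_coe.mp hx) y (Finset.mem_coe.mp hy) hne hxy
      by_cases hout : ∃ x ∈ A, ∃ y ∈ A, x ≠ y ∧ w x = w y ∧ w x ≠ w a
      · obtain ⟨x, hx, y, hy, hxy, hwxy, hwa⟩ := hout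
        refine Finset.sum_eq_zero fun B hB => ?_
        rw [Finset.mem_filter, Finset.mem_powerset] at hB
        obtain ⟨hBA, haB, hconst⟩ := hB
        rw [if_neg, mul_zero]
        intro hinjAB
        have hxB : x ∉ B := fun h => hwa (hconst x h)
        have hyB : y ∉ B := fun h => hwa (by rw [hwxy]; exact hconst y h)
        exact hxy (hinjAB (Finset.mem_coe.mpr (Finset.mem_sdiff.mpr ⟨hx, hxB⟩))
          (Finset.mem_coe.mpr (Finset.mem_sdiff.mpr ⟨hy, hyB⟩)) hwxy)
      · push_neg at hout
        set Fa := A.filter (fun i => w i = w a) with hFa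
        have haFa : a ∈ Fa := Finset.mem_filter.mpr ⟨ha, rfl⟩
        have hFaA : Fa ⊆ A := Finset.filter_subset _ _
        have hwFa : ∀ i ∈ Fa, w i = w a := fun i hi => (Finset.mem_filter.mp hi).2
        have hcard2 : 2 ≤ Fa.card := by
          obtain ⟨x, hx, y, hy, hxy, hwxy⟩ := hne
          have hxa : w x = w a := hout x hx y hy hxy hwxy
          have hya : w y = w a := by rw [← hwxy]; exact hxa
          rw [Nat.succ_le_iff]
          exact Finset.one_lt_card.mpr ⟨x, Finset.mem_filter.mpr ⟨hx, hxa⟩,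
            y, Finset.mem_filter.mpr ⟨hy, hya⟩, hxy⟩
        have hBiff : ∀ B, B ∈ A.powerset.filter (fun B => a ∈ B ∧ ∀ i ∈ B, w i = w a) ↔
            a ∈ B ∧ B ⊆ Fa := by
          intro B
          rw [Finset.mem_filter, Finset.mem_powerset]
          constructor
          · rintro ⟨hBA, haB, hconst⟩
            exact ⟨haB, fun i hi => Finset.mem_filter.mpr ⟨hBA hi, hconst i hi⟩⟩
          · rintro ⟨haB, hBFa⟩
            exact ⟨fun i hi => hFaA (hBFa hi), haB, fun i hi => hwFa i (hBFa hi)⟩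
        have hinj_iff : ∀ B, a ∈ B → B ⊆ Fa → (Set.InjOn w ↑(A \ B) ↔ (Fa \ B).card ≤ 1) := by
          intro B haB hBFa
          constructor
          · intro hI
            by_contra hc
            push_neg at hc
            obtain ⟨x, hxm, y, hym, hxy⟩ := Finset.one_lt_card.mp hc
            rw [Finset.mem_sdiff] at hxm hym
            have hwx : w x = w a := hwFa x hxm.1
            have hwy : w y = w a := hwFa y hym.1
            exact hxy (hI (Finset.mem_coe.mpr (Finset.mem_sdiff.mpr ⟨hFaA hxm.1, hxm.2⟩))
              (Finset.mem_coe.mpr (Finset.mem_sdiff.mpr ⟨hFaA hym.1, hym.2⟩))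
              (by rw [hwx, hwy]))
          · intro hc x hx y hy hwxy
            by_contra hxy
            rw [Finset.mem_coe, Finset.mem_sdiff] at hx hy
            have hxa : w x = w a := hout x hx.1 y hy.1 hxy hwxy
            have hya : w y = w a := by rw [← hwxy]; exact hxa
            have hxFa : x ∈ Fa \ B := Finset.mem_sdiff.mpr
              ⟨Finset.mem_filter.mpr ⟨hx.1, hxa⟩, hx.2⟩
            have hyFa : y ∈ Fa \ B := Finset.mem_sdiff.mpr
              ⟨Finset.mem_filter.mpr ⟨hy.1, hya⟩, hy.2⟩
            exact absurd hc (not_le.mpr (Finset.one_lt_card.mpr ⟨x, hxFa, y, hyFa, hxy⟩))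
        -- rewrite the sum as a sum of pure coefficients over a filtered set
        have hstep : ∑ B ∈ A.powerset.filter (fun B => a ∈ B ∧ ∀ i ∈ B, w i = w a),
            (-1 : ℝ) ^ (B.card - 1) * ((B.card - 1).factorial : ℝ) *
              (if Set.InjOn w ↑(A \ B) then (1:ℝ) else 0) =
            ∑ B ∈ (A.powerset.filter (fun B => a ∈ B ∧ ∀ i ∈ B, w i = w a)).filter
                (fun B => (Fa \ B).card ≤ 1),
              (-1 : ℝ) ^ (B.card - 1) * ((B.card - 1).factorial : ℝ) := by
          conv_rhs => rw [Finset.sum_filter]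
          refine Finset.sum_congr rfl fun B hB => ?_
          obtain ⟨haB, hBFa⟩ := (hBiff B).mp hB
          by_cases hle : (Fa \ B).card ≤ 1
          · rw [if_pos hle, if_pos ((hinj_iff B haB hBFa).mpr hle), mul_one]
          · rw [if_neg hle, if_neg (fun h => hle ((hinj_iff B haB hBFa).mp h)), mul_zero]
        rw [hstep]
        have hsetdesc : (A.powerset.filter (fun B => a ∈ B ∧ ∀ i ∈ B, w i = w a)).filter
            (fun B => (Fa \ B).card ≤ 1) =
            insert Fa ((Fa.erase a).image (fun z => Fa.erase z)) := by
          ext B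
          rw [Finset.mem_filter, hBiff B, Finset.mem_insert, Finset.mem_image]
          constructor
          · rintro ⟨⟨haB, hBFa⟩, hle⟩
            interval_cases hcc : (Fa \ B).card
            · left
              have : Fa \ B = ∅ := Finset.card_eq_zero.mp hcc
              have hsub2 : Fa ⊆ B := by
                intro i hi
                by_contra hiB
                exact absurd (Finset.mem_sdiff.mpr ⟨hi, hiB⟩) (this ▸ Finset.notMem_empty i)
              exact Finset.Subset.antisymm hBFa hsub2
            · right
              obtain ⟨z, hz⟩ := Finset.card_eq_one.mp hcc
              have hzFa : z ∈ Fa := (Finset.mem_sdiff.mp (hz ▸ Finset.mem_singleton_self z)).1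
              have hzB : z ∉ B := (Finset.mem_sdiff.mp (hz ▸ Finset.mem_singleton_self z)).2
              refine ⟨z, Finset.mem_erase.mpr ⟨fun h => hzB (h ▸ haB), hzFa⟩, ?_⟩
              have : Fa \ (Fa \ B) = B := Finset.sdiff_sdiff_eq_self hBFa
              rw [← this, hz, Finset.sdiff_singleton_eq_erase]
          · intro h
            rcases h with rfl | ⟨z, hz, rfl⟩
            · exact ⟨⟨haFa, Finset.Subset.refl _⟩, by simp⟩
            · rw [Finset.mem_erase] at hz
              refine ⟨⟨Finset.mem_erase.mpr ⟨fun h => hz.1 h.symm, haFa⟩,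
                Finset.erase_subset _ _⟩, ?_⟩
              rw [Finset.sdiff_erase_self hz.2]
              simp
        rw [hsetdesc]
        have hFanotmem : Fa ∉ (Fa.erase a).image (fun z => Fa.erase z) := by
          rw [Finset.mem_image]
          rintro ⟨z, hz, hzz⟩
          rw [Finset.mem_erase] at hz
          exact Finset.notMem_erase z Fa (by rw [hzz]; exact hz.2)
        rw [Finset.sum_insert hFanotmem]
        rw [Finset.sum_image (fun x hx y hy h => by
          by_contra hxy
          rw [Finset.mem_coe, Finset.mem_erase] at hx hy
          exact absurd (h ▸ Finset.mem_erase.mpr ⟨hxy, hx.2⟩) (Finset.notMem_erase x Fa))]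
        have hcasterase : ∀ z ∈ Fa.erase a, (-1 : ℝ) ^ ((Fa.erase z).card - 1) *
            (((Fa.erase z).card - 1).factorial : ℝ) =
            (-1 : ℝ) ^ (Fa.card - 2) * ((Fa.card - 2).factorial : ℝ) := by
          intro z hz
          rw [Finset.card_erase_of_mem (Finset.mem_of_mem_erase hz)]
          congr 2 <;> omega
        rw [Finset.sum_congr rfl hcasterase, Finset.sum_const, Finset.card_erase_of_mem haFa]
        set f := Fa.card with hf
        have h1 : f - 1 = (f - 2) + 1 := by omega
        rw [h1, pow_succ, Nat.factorial_succ, nsmul_eq_mul]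
        push_cast
        ring

end Combinatorics

end Hoffman

/-- **Hoffman's partition identity.**  For integers `s₁, …, sₙ ≥ 2`,
`∑_{σ ∈ Sₙ} ζ(s_{σ(1)}, …, s_{σ(n)})
  = ∑_𝒯 (−1)^{n−|𝒯|} ∏_{T∈𝒯}(|T|−1)! · ∏_{T∈𝒯} ζ(∑_{j∈T} s_j)`,
the right sum being over all unordered set partitions `𝒯` of `{1,…,n}` into
nonempty blocks. -/
theorem hoffman_partition_identity
    (n : ℕ) (hn : 1 ≤ n) (s : Fin n → ℕ) (hs : ∀ i, 2 ≤ s i) :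
    ∑ σ : Equiv.Perm (Fin n), multipleZeta (fun i => s (σ i)) =
      ∑ 𝒯 ∈ (Finset.univ : Finset (Finset (Finset (Fin n)))).filter
          (fun 𝒯 => (∀ T ∈ 𝒯, T.Nonempty) ∧
            (∀ T ∈ 𝒯, ∀ T' ∈ 𝒯, T ≠ T' → Disjoint T T') ∧
            𝒯.sup id = Finset.univ),
        ((-1 : ℝ) ^ (n - 𝒯.card) * ∏ T ∈ 𝒯, ((T.card - 1).factorial : ℝ)) *
          ∏ T ∈ 𝒯, multipleZeta (fun _ : Fin 1 => ∑ j ∈ T, s j) := by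
  classical
  have hL := Hoffman.hasSum_lhs s hs
  set c : Finset (Finset (Fin n)) → ℝ :=
    fun 𝒯 => (-1 : ℝ) ^ (n - 𝒯.card) * ∏ T ∈ 𝒯, ((T.card - 1).factorial : ℝ) with hc
  set fil := (Finset.univ : Finset (Finset (Finset (Fin n)))).filter
      (fun 𝒯 => (∀ T ∈ 𝒯, T.Nonempty) ∧
        (∀ T ∈ 𝒯, ∀ T' ∈ 𝒯, T ≠ T' → Disjoint T T') ∧
        𝒯.sup id = Finset.univ) with hfil
  have hpart : ∀ 𝒯 ∈ fil, HasSum (fun w =>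
      c 𝒯 * Set.indicator {w : Fin n → ℕ | ∀ T ∈ 𝒯, ∀ i ∈ T, ∀ j ∈ T, w i = w j}
        (Hoffman.F s) w)
      (c 𝒯 * ∏ T ∈ 𝒯, ∑' m, Hoffman.g (∑ j ∈ T, s j) m) := by
    intro 𝒯 h
    obtain ⟨h1, h2, h3⟩ := (Finset.mem_filter.mp h).2
    exact (Hoffman.hasSum_partition s hs 𝒯 h1 h2 h3).mul_left (c 𝒯)
  have total := hasSum_sum (s := fil)
    (f := fun 𝒯 w => c 𝒯 * Set.indicator
      {w : Fin n → ℕ | ∀ T ∈ 𝒯, ∀ i ∈ T, ∀ j ∈ T, w i = w j} (Hoffman.F s) w)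
    (a := fun 𝒯 => c 𝒯 * ∏ T ∈ 𝒯, ∑' m, Hoffman.g (∑ j ∈ T, s j) m) hpart
  have hpt : ∀ w : Fin n → ℕ, (∑ 𝒯 ∈ fil, c 𝒯 * Set.indicator
      {w : Fin n → ℕ | ∀ T ∈ 𝒯, ∀ i ∈ T, ∀ j ∈ T, w i = w j} (Hoffman.F s) w)
      = Set.indicator {w : Fin n → ℕ | Function.Injective w ∧ ∀ i, 0 < w i}
        (Hoffman.F s) w := by
    intro w
    have e1 : ∀ 𝒯, c 𝒯 * Set.indicator
        {w : Fin n → ℕ | ∀ T ∈ 𝒯, ∀ i ∈ T, ∀ j ∈ T, w i = w j} (Hoffman.F s) w =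
        if (∀ T ∈ 𝒯, ∀ i ∈ T, ∀ j ∈ T, w i = w j) then c 𝒯 * Hoffman.F s w else 0 := by
      intro 𝒯
      by_cases h' : ∀ T ∈ 𝒯, ∀ i ∈ T, ∀ j ∈ T, w i = w j
      · rw [if_pos h', Set.indicator_of_mem
          (show w ∈ {w : Fin n → ℕ | ∀ T ∈ 𝒯, ∀ i ∈ T, ∀ j ∈ T, w i = w j} from h')]
      · rw [if_neg h', Set.indicator_of_notMem
          (show w ∉ {w : Fin n → ℕ | ∀ T ∈ 𝒯, ∀ i ∈ T, ∀ j ∈ T, w i = w j} from h'),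
          mul_zero]
    rw [Finset.sum_congr rfl (fun 𝒯 _ => e1 𝒯), ← Finset.sum_filter]
    have e2 : fil.filter (fun 𝒯 => ∀ T ∈ 𝒯, ∀ i ∈ T, ∀ j ∈ T, w i = w j)
        = Hoffman.parts w Finset.univ := by
      ext 𝒯
      simp only [hfil, Hoffman.parts, Finset.mem_filter, Finset.mem_univ, true_and]
      tauto
    rw [e2, ← Finset.sum_mul]
    have e3 : ∑ 𝒯 ∈ Hoffman.parts w Finset.univ, c 𝒯 = Hoffman.M w Finset.univ := by
      rw [Hoffman.M]
      refine Finset.sum_congr rfl fun 𝒯 _ => ?_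
      rw [hc]
      congr 2
      rw [Finset.card_univ, Fintype.card_fin]
    rw [e3, Hoffman.M_eq]
    have hcond : Set.InjOn w ↑(Finset.univ : Finset (Fin n)) ↔ Function.Injective w := by
      rw [Finset.coe_univ]
      exact Set.injOn_univ
    by_cases hinj : Function.Injective w
    · rw [if_pos (hcond.mpr hinj), one_mul]
      by_cases hpos : ∀ i, 0 < w i
      · rw [Set.indicator_of_mem (show w ∈
          {w : Fin n → ℕ | Function.Injective w ∧ ∀ i, 0 < w i} from ⟨hinj, hpos⟩)]
      · push_neg at hpos
        obtain ⟨i, hi⟩ := hpos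
        rw [Set.indicator_of_notMem
          (show w ∉ {w : Fin n → ℕ | Function.Injective w ∧ ∀ i, 0 < w i} from
            fun hmem => absurd (hmem.2 i) (by omega))]
        show (∏ i, Hoffman.g (s i) (w i)) = 0
        refine Finset.prod_eq_zero (Finset.mem_univ i) ?_
        rw [show w i = 0 from by omega]
        exact Hoffman.g_zero (le_trans one_le_two (hs i))
    · rw [if_neg (fun h => hinj (hcond.mp h)), zero_mul,
        Set.indicator_of_notMem (show w ∉
          {w : Fin n → ℕ | Function.Injective w ∧ ∀ i, 0 < w i} from
          fun hmem => hinj hmem.1)]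
  have hS := hL.unique (total.congr_fun (fun w => (hpt w).symm))
  rw [hS]
  refine Finset.sum_congr rfl fun 𝒯 h𝒯 => ?_
  obtain ⟨h1, _, _⟩ := (Finset.mem_filter.mp h𝒯).2
  have hz : ∏ T ∈ 𝒯, multipleZeta (fun _ : Fin 1 => ∑ j ∈ T, s j)
      = ∏ T ∈ 𝒯, ∑' m, Hoffman.g (∑ j ∈ T, s j) m :=
    Finset.prod_congr rfl fun T hT => Hoffman.multipleZeta_single
      (le_trans one_le_two (Hoffman.sum_block_ge hs (h1 T hT)))
  rw [hz, hc]
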